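/- Let α ∈ (0,1) and let (x_n)_{n≥0} be real-valued random variables on a probability space such that almost surely x_n < x_{n+1} for all n ≥ 0, and suppose there is a constant C with E[(x_n − x_k)^{1+α}] ≤ C·(n−k)^{1+α} for all integers n > k ≥ 0. Then almost surely there exists a unit flux of finite energy from index 0 to infinity: an antisymmetric function F : ℕ × ℕ → ℝ such that for every n the sum Σ_k F(n,k) converges absolutely and equals 1 if n = 0 and 0 otherwise, and Σ_{0≤n<k} max(1, (x_k − x_n)^{1+α})·F(n,k)² < ∞. (This expresses that the random walk on the random point set S = {x_n} with jump weights bounded below by a multiple of φ_{p,α}(|x−y|) = min(1,|x−y|^{−1−α}) is almost surely transient.) -/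

import Mathlib

open MeasureTheory
open scoped ENNReal NNReal

namespace Transience1D

def lvl (n : ℕ) : ℕ := Nat.log 2 (n + 1)

noncomputable def w (m : ℕ) : ℝ := ((2 : ℝ) ^ (2 * m + 1))⁻¹

noncomputable def Fl (n k : ℕ) : ℝ :=
  if lvl k = lvl n + 1 then w (lvl n)
  else if lvl n = lvl k + 1 then -(w (lvl k)) else 0

lemma lvl_eq_iff {n m : ℕ} : lvl n = m ↔ 2 ^ m ≤ n + 1 ∧ n + 1 < 2 ^ (m + 1) :=
  Nat.log_eq_iff (Or.inr ⟨one_lt_two, Nat.succ_ne_zero n⟩)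

lemma lvl_ge {n m : ℕ} (h : 2 ^ m ≤ n + 1) : m ≤ lvl n :=
  (Nat.le_log_iff_pow_le one_lt_two (Nat.succ_ne_zero n)).2 h

lemma lvl_lt (n : ℕ) : n + 1 < 2 ^ (lvl n + 1) := Nat.lt_pow_succ_log_self one_lt_two _

lemma lvl_le (n : ℕ) : 2 ^ lvl n ≤ n + 1 := Nat.pow_log_le_self 2 (Nat.succ_ne_zero n)

lemma lvl_mono {n k : ℕ} (h : n ≤ k) : lvl n ≤ lvl k := Nat.log_mono_right (by omega)

lemma Fl_antisymm (n k : ℕ) : Fl n k = - Fl k n := by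
  unfold Fl
  rcases eq_or_ne (lvl k) (lvl n + 1) with h1 | h1 <;>
    rcases eq_or_ne (lvl n) (lvl k + 1) with h2 | h2
  · omega
  · rw [if_pos h1, if_neg h2, if_pos h1, neg_neg]
  · rw [if_neg h1, if_pos h2, if_pos h2]
  · rw [if_neg h1, if_neg h2, if_neg h2, if_neg h1, neg_zero]

lemma Fl_eq_zero_of_large {n k : ℕ} (h : 2 ^ (lvl n + 2) ≤ k + 1) : Fl n k = 0 := by
  have h1 : lvl n + 2 ≤ lvl k := lvl_ge h
  unfold Fl
  rw [if_neg (by omega), if_neg (by omega)]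

lemma w_pos (m : ℕ) : 0 < w m := by unfold w; positivity

lemma filter_lvl (N j : ℕ) (hN : 2 ^ (j + 1) ≤ N + 1) :
    (Finset.range N).filter (fun k => lvl k = j) = Finset.Ico (2 ^ j - 1) (2 ^ (j + 1) - 1) := by
  ext k
  have h1 : 1 ≤ 2 ^ j := Nat.one_le_two_pow
  have h2 : 1 ≤ 2 ^ (j + 1) := Nat.one_le_two_pow
  simp only [Finset.mem_filter, Finset.mem_range, Finset.mem_Ico, lvl_eq_iff]
  omega

lemma card_filter_lvl (N j : ℕ) (hN : 2 ^ (j + 1) ≤ N + 1) :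
    ((Finset.range N).filter (fun k => lvl k = j)).card = 2 ^ j := by
  rw [filter_lvl N j hN, Nat.card_Ico]
  have : 2 ^ (j + 1) = 2 * 2 ^ j := by rw [pow_succ]; ring
  omega

lemma Fl_vanish (n : ℕ) : ∀ k ∉ Finset.range (2 ^ (lvl n + 2)), Fl n k = 0 := by
  intro k hk
  rw [Finset.mem_range, not_lt] at hk
  exact Fl_eq_zero_of_large (by omega)

lemma summable_abs_Fl (n : ℕ) : Summable (fun k => |Fl n k|) :=
  summable_of_ne_finset_zero (s := Finset.range (2 ^ (lvl n + 2)))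
    (fun k hk => by rw [Fl_vanish n k hk, abs_zero])

lemma sum_piece (N j : ℕ) (hN : 2 ^ (j + 1) ≤ N + 1) (c : ℝ) :
    ∑ k ∈ Finset.range N, (if lvl k = j then c else 0) = 2 ^ j * c := by
  rw [← Finset.sum_filter, Finset.sum_const, card_filter_lvl N j hN, nsmul_eq_mul]
  push_cast; ring

lemma hsum_decomp (n k : ℕ) :
    Fl n k = (if lvl k = lvl n + 1 then w (lvl n) else 0)
      + (if lvl k + 1 = lvl n then -(w (lvl n - 1)) else 0) := by
  rcases eq_or_ne (lvl k) (lvl n + 1) with h1 | h1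
  · have h3 : ¬(lvl k + 1 = lvl n) := by omega
    unfold Fl
    rw [if_pos h1, if_pos h1, if_neg h3, add_zero]
  · rcases eq_or_ne (lvl n) (lvl k + 1) with h2 | h2
    · have h3 : lvl k + 1 = lvl n := by omega
      have h4 : lvl k = lvl n - 1 := by omega
      unfold Fl
      rw [if_neg h1, if_neg h1, if_pos h2, if_pos h3, h4, zero_add]
    · have h3 : ¬(lvl k + 1 = lvl n) := by omega
      unfold Fl
      rw [if_neg h1, if_neg h1, if_neg h2, if_neg h3, add_zero]

lemma tsum_Fl (n : ℕ) : ∑' k, Fl n k = if n = 0 then 1 else 0 := by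
  rw [tsum_eq_sum (Fl_vanish n)]
  rw [Finset.sum_congr rfl (fun k _ => hsum_decomp n k), Finset.sum_add_distrib,
    sum_piece _ _ (Nat.le_succ _) (w (lvl n))]
  by_cases hn : n = 0
  · subst hn
    have hl : lvl 0 = 0 := Nat.log_one_right 2
    have hz : ∀ k ∈ Finset.range (2 ^ (lvl 0 + 2)),
        (if lvl k + 1 = lvl 0 then -(w (lvl 0 - 1)) else 0) = 0 := by
      intro k _
      have : ¬(lvl k + 1 = lvl 0) := by omega
      rw [if_neg this]
    rw [if_pos rfl, Finset.sum_eq_zero hz, hl]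
    unfold w
    norm_num
  · rw [if_neg hn]
    have hm1 : 1 ≤ lvl n := lvl_ge (show 2 ^ 1 ≤ n + 1 by omega)
    obtain ⟨m', hm'⟩ : ∃ m', lvl n = m' + 1 := ⟨lvl n - 1, by omega⟩
    have hcongr : ∀ k ∈ Finset.range (2 ^ (lvl n + 2)),
        (if lvl k + 1 = lvl n then -(w (lvl n - 1)) else 0)
          = (if lvl k = m' then -(w m') else 0) := by
      intro k _
      rcases eq_or_ne (lvl k) m' with h | h
      · have h2 : lvl k + 1 = lvl n := by omega
        have h3 : lvl n - 1 = m' := by omega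
        rw [if_pos h2, if_pos h, h3]
      · have h2 : ¬(lvl k + 1 = lvl n) := by omega
        rw [if_neg h2, if_neg h]
    rw [Finset.sum_congr rfl hcongr]
    rw [sum_piece _ _ (by
      have := Nat.pow_le_pow_right (show 0 < 2 from by norm_num)
        (show m' + 1 ≤ lvl n + 2 from by omega)
      omega) (-(w m'))]
    rw [hm']
    unfold w
    rw [show 2 * (m' + 1) + 1 = (m' + 2) + (m' + 1) from by ring,
      show 2 * m' + 1 = m' + (m' + 1) from by ring, pow_add, pow_add]
    have h1 : ((2:ℝ) ^ (m' + 1)) ≠ 0 := by positivity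
    have h2 : ((2:ℝ) ^ (m' + 2)) ≠ 0 := by positivity
    have h3 : ((2:ℝ) ^ m') ≠ 0 := by positivity
    field_simp
    rw [show m' + 2 + (m' + 1) = (m' + (m' + 1)) + 2 from by omega, pow_add]
    ring

/-! ## Energy bounds -/

noncomputable def cE (α C : ℝ) (m : ℕ) : ℝ :=
  w m ^ 2 * (1 + |C| * ((2:ℝ) ^ (m + 2)) ^ (1 + α))

lemma cE_nonneg (α C : ℝ) (m : ℕ) : 0 ≤ cE α C m := by
  unfold cE
  have := w_pos m
  positivity

lemma cE_bound (α C : ℝ) (hα0 : 0 < α) (hα1 : α < 1) (n : ℕ) :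
    ((2:ℝ) ^ (lvl n + 1)) * cE α C (lvl n)
      ≤ (1 + |C| * (4:ℝ) ^ (1 + α)) * (2 / ((n:ℝ) + 1)) ^ (2 - α) := by
  set m := lvl n with hm
  set t : ℝ := ((2:ℝ) ^ m)⁻¹ with htdef
  have ht0 : 0 < t := by positivity
  have ht1 : t ≤ 1 := by
    rw [htdef]
    exact inv_le_one_of_one_le₀ (one_le_pow₀ (by norm_num))
  have h2mne : ((2:ℝ) ^ m) ≠ 0 := by positivity
  have hw : w m = t ^ 2 / 2 := by
    unfold w
    rw [show 2 * m + 1 = m + m + 1 from by ring, pow_add, pow_add, pow_one, htdef]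
    field_simp
  have h2m2 : ((2:ℝ)) ^ (m + 2) = 4 / t := by
    rw [pow_add, htdef]
    field_simp
    ring
  have hA : ((2:ℝ)) ^ (m + 1) * (w m ^ 2) = t ^ 3 / 2 := by
    rw [hw, pow_add, pow_one, htdef]
    field_simp
  have htne : t ^ (1 + α) ≠ 0 := (Real.rpow_pos_of_pos ht0 _).ne'
  have hstep1 : ((2:ℝ)) ^ (m + 1) * cE α C m
      = t ^ 3 / 2 + (|C| * (4:ℝ) ^ (1 + α) / 2) * (t ^ 3 / t ^ (1 + α)) := by
    unfold cE
    rw [← mul_assoc, hA, h2m2, Real.div_rpow (by norm_num) ht0.le]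
    field_simp
  have htt : t ^ 3 / t ^ (1 + α) = t ^ (2 - α) := by
    rw [← Real.rpow_natCast t 3, ← Real.rpow_sub ht0]
    congr 1
    push_cast
    ring
  have ht3 : t ^ 3 ≤ t ^ (2 - α) := by
    rw [← Real.rpow_natCast t 3]
    apply Real.rpow_le_rpow_of_exponent_ge ht0 ht1
    push_cast
    linarith
  have hpos : (0:ℝ) ≤ t ^ (2 - α) := (Real.rpow_pos_of_pos ht0 _).le
  have hC4 : (0:ℝ) ≤ |C| * (4:ℝ) ^ (1 + α) := by positivity
  have hstep2 : ((2:ℝ)) ^ (m + 1) * cE α C m ≤ (1 + |C| * (4:ℝ) ^ (1 + α)) * t ^ (2 - α) := by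
    rw [hstep1, htt]
    nlinarith [hpos, hC4, ht3]
  refine hstep2.trans ?_
  have htle : t ≤ 2 / ((n:ℝ) + 1) := by
    have hnat : (n : ℕ) + 1 < 2 ^ (m + 1) := lvl_lt n
    have hcast : ((n:ℝ) + 1) < 2 ^ m * 2 := by
      have := (Nat.cast_lt (α := ℝ)).2 hnat
      push_cast at this
      rw [pow_add, pow_one] at this
      linarith
    rw [htdef, inv_eq_one_div, div_le_div_iff₀ (by positivity) (by positivity)]
    nlinarith
  apply mul_le_mul_of_nonneg_left _ (by positivity)
  exact Real.rpow_le_rpow ht0.le htle (by linarith)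

lemma summable_bnd (α C : ℝ) (hα0 : 0 < α) (hα1 : α < 1) :
    Summable (fun n : ℕ => (1 + |C| * (4:ℝ) ^ (1 + α)) * (2 / ((n:ℝ) + 1)) ^ (2 - α)) := by
  have h1 : Summable (fun n : ℕ => (((n:ℝ)) ^ (2 - α))⁻¹) :=
    Real.summable_nat_rpow_inv.2 (by linarith)
  have h2 : Summable (fun n : ℕ => ((((n:ℝ) + 1)) ^ (2 - α))⁻¹) := by
    have h3 := (summable_nat_add_iff (f := fun n : ℕ => (((n:ℝ)) ^ (2 - α))⁻¹) 1).2 h1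
    exact h3.congr (fun n => by push_cast; ring_nf)
  have h4 := h2.mul_left ((1 + |C| * (4:ℝ) ^ (1 + α)) * (2:ℝ) ^ (2 - α))
  refine h4.congr (fun n => ?_)
  rw [Real.div_rpow (by norm_num : (0:ℝ) ≤ 2) (by positivity), div_eq_mul_inv]
  ring

lemma psi_vanish (α C : ℝ) (n : ℕ) :
    ∀ k ∉ Finset.range (2 ^ (lvl n + 2)),
      (if lvl k = lvl n + 1 then ENNReal.ofReal (cE α C (lvl n)) else 0) = 0 := by
  intro k hk
  rw [Finset.mem_range, not_lt] at hk
  have h1 : lvl n + 2 ≤ lvl k := lvl_ge (by omega)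
  rw [if_neg (by omega)]

lemma inner_psi (α C : ℝ) (n : ℕ) :
    (∑' k : ℕ, if lvl k = lvl n + 1 then ENNReal.ofReal (cE α C (lvl n)) else 0)
      = ENNReal.ofReal (((2:ℝ) ^ (lvl n + 1)) * cE α C (lvl n)) := by
  rw [tsum_eq_sum (psi_vanish α C n), ← Finset.sum_filter, Finset.sum_const,
    card_filter_lvl _ (lvl n + 1) (Nat.le_succ _), nsmul_eq_mul]
  rw [show (((2:ℕ) ^ (lvl n + 1) : ℕ) : ℝ≥0∞) = ENNReal.ofReal ((2:ℝ) ^ (lvl n + 1)) from by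
    rw [← ENNReal.ofReal_natCast]
    norm_num]
  rw [← ENNReal.ofReal_mul (by positivity)]

lemma energy_det (α C : ℝ) (hα0 : 0 < α) (hα1 : α < 1) :
    (∑' p : ℕ × ℕ, if p.1 < p.2 then
        ENNReal.ofReal (Fl p.1 p.2 ^ 2)
          * (1 + ENNReal.ofReal (C * (((p.2 : ℕ) : ℝ) - ((p.1 : ℕ) : ℝ)) ^ (1 + α)))
      else 0) ≠ ⊤ := by
  have hpt : ∀ p : ℕ × ℕ,
      (if p.1 < p.2 then
        ENNReal.ofReal (Fl p.1 p.2 ^ 2)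
          * (1 + ENNReal.ofReal (C * (((p.2 : ℕ) : ℝ) - ((p.1 : ℕ) : ℝ)) ^ (1 + α)))
      else 0)
      ≤ (if lvl p.2 = lvl p.1 + 1 then ENNReal.ofReal (cE α C (lvl p.1)) else 0) := by
    rintro ⟨n, k⟩
    dsimp only
    by_cases hnk : n < k
    · rw [if_pos hnk]
      by_cases hl : lvl k = lvl n + 1
      · rw [if_pos hl]
        have hd0 : (0:ℝ) ≤ (k:ℝ) - n := by
          have : (n:ℝ) ≤ k := Nat.cast_le.2 hnk.le
          linarith
        have hdle : (k:ℝ) - n ≤ (2:ℝ) ^ (lvl n + 2) := by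
          have hnat : k + 1 < 2 ^ (lvl k + 1) := lvl_lt k
          rw [hl] at hnat
          have : (k:ℝ) + 1 ≤ ((2:ℕ) ^ (lvl n + 1 + 1) : ℕ) := by exact_mod_cast hnat.le
          push_cast at this
          have hn0 : (0:ℝ) ≤ n := Nat.cast_nonneg n
          calc (k:ℝ) - n ≤ (k:ℝ) + 1 := by linarith
            _ ≤ (2:ℝ) ^ (lvl n + 2) := by
                rw [show lvl n + 1 + 1 = lvl n + 2 from rfl] at this
                linarith
        have hFl : Fl n k = w (lvl n) := by unfold Fl; rw [if_pos hl]
        rw [hFl]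
        have hRHS : ENNReal.ofReal (cE α C (lvl n))
            = ENNReal.ofReal (w (lvl n) ^ 2)
              * (1 + ENNReal.ofReal (|C| * ((2:ℝ) ^ (lvl n + 2)) ^ (1 + α))) := by
          unfold cE
          rw [ENNReal.ofReal_mul (by positivity),
            ENNReal.ofReal_add (by norm_num) (by positivity), ENNReal.ofReal_one]
        rw [hRHS]
        apply mul_le_mul_right
        apply add_le_add_right
        apply ENNReal.ofReal_le_ofReal
        have h1 : ((k:ℝ) - n) ^ (1 + α) ≤ ((2:ℝ) ^ (lvl n + 2)) ^ (1 + α) :=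
          Real.rpow_le_rpow hd0 hdle (by linarith)
        have h2 : (0:ℝ) ≤ ((k:ℝ) - n) ^ (1 + α) := Real.rpow_nonneg hd0 _
        calc C * ((k:ℝ) - n) ^ (1 + α) ≤ |C| * ((k:ℝ) - n) ^ (1 + α) :=
              mul_le_mul_of_nonneg_right (le_abs_self C) h2
          _ ≤ |C| * ((2:ℝ) ^ (lvl n + 2)) ^ (1 + α) :=
              mul_le_mul_of_nonneg_left h1 (abs_nonneg C)
      · rw [if_neg hl]
        have hmle : lvl n ≤ lvl k := lvl_mono hnk.le
        have hFl : Fl n k = 0 := by unfold Fl; rw [if_neg hl, if_neg (by omega)]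
        rw [hFl]
        norm_num
    · rw [if_neg hnk]
      exact zero_le
  refine ne_top_of_le_ne_top ?_ (ENNReal.tsum_le_tsum hpt)
  rw [ENNReal.tsum_prod
    (f := fun n k => if lvl k = lvl n + 1 then ENNReal.ofReal (cE α C (lvl n)) else 0)]
  have houter : ∀ n : ℕ,
      (∑' k : ℕ, if lvl k = lvl n + 1 then ENNReal.ofReal (cE α C (lvl n)) else 0)
        ≤ ENNReal.ofReal ((1 + |C| * (4:ℝ) ^ (1 + α)) * (2 / ((n:ℝ) + 1)) ^ (2 - α)) := by
    intro n
    rw [inner_psi]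
    exact ENNReal.ofReal_le_ofReal (cE_bound α C hα0 hα1 n)
  refine ne_top_of_le_ne_top ?_ (ENNReal.tsum_le_tsum houter)
  rw [← ENNReal.ofReal_tsum_of_nonneg (fun n => by positivity) (summable_bnd α C hα0 hα1)]
  exact ENNReal.ofReal_ne_top

end Transience1D

open Transience1D in
/-- for `α ∈ (0,1)` and an a.s. increasing sequence of random points `(x_n)`
with `E[(x_n − x_k)^{1+α}] ≤ C (n−k)^{1+α}`, almost surely there is a unit flux of finite
energy from index 0 to infinity. -/
theorem transience_one_dim_points (α : ℝ) (hα0 : 0 < α) (hα1 : α < 1)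
    {Ω : Type*} [MeasurableSpace Ω] (μ : Measure Ω) [IsProbabilityMeasure μ]
    (x : ℕ → Ω → ℝ) (hmeas : ∀ n, Measurable (x n))
    (hmono : ∀ᵐ ω ∂μ, ∀ n : ℕ, x n ω < x (n + 1) ω)
    (C : ℝ)
    (hmom : ∀ n k : ℕ, k < n →
      ∫⁻ ω, ENNReal.ofReal ((x n ω - x k ω) ^ (1 + α)) ∂μ ≤
        ENNReal.ofReal (C * ((n : ℝ) - (k : ℝ)) ^ (1 + α))) :
    ∀ᵐ ω ∂μ, ∃ F : ℕ → ℕ → ℝ,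
      (∀ n k : ℕ, F n k = - F k n) ∧
      (∀ n : ℕ, Summable (fun k : ℕ => |F n k|)) ∧
      (∀ n : ℕ, ∑' k : ℕ, F n k = if n = 0 then 1 else 0) ∧
      Summable (fun p : ℕ × ℕ =>
        if p.1 < p.2 then
          max 1 ((x p.2 ω - x p.1 ω) ^ (1 + α)) * F p.1 p.2 ^ 2
        else 0) := by
  classical
  set G : ℕ × ℕ → Ω → ℝ≥0∞ := fun p ω =>
    ENNReal.ofReal (if p.1 < p.2 then
      max 1 ((x p.2 ω - x p.1 ω) ^ (1 + α)) * Fl p.1 p.2 ^ 2 else 0) with hG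
  have hGmeas : ∀ p : ℕ × ℕ, Measurable (G p) := by
    intro p
    by_cases h : p.1 < p.2
    · simp only [hG, if_pos h]
      exact ((measurable_const.max
        (((hmeas p.2).sub (hmeas p.1)).pow_const _)).mul_const _).ennreal_ofReal
    · simp only [hG, if_neg h]
      exact measurable_const
  have hGle : ∀ p : ℕ × ℕ, ∫⁻ ω, G p ω ∂μ ≤
      (if p.1 < p.2 then ENNReal.ofReal (Fl p.1 p.2 ^ 2)
        * (1 + ENNReal.ofReal (C * (((p.2 : ℕ) : ℝ) - ((p.1 : ℕ) : ℝ)) ^ (1 + α))) else 0) := by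
    rintro ⟨n, k⟩
    dsimp only
    by_cases h : n < k
    · rw [if_pos h]
      have hc0 : (0:ℝ) ≤ Fl n k ^ 2 := sq_nonneg _
      have hptw : ∀ ω, G (n, k) ω ≤
          ENNReal.ofReal (Fl n k ^ 2) + ENNReal.ofReal ((x k ω - x n ω) ^ (1 + α))
            * ENNReal.ofReal (Fl n k ^ 2) := by
        intro ω
        simp only [hG, if_pos h]
        set t : ℝ := (x k ω - x n ω) ^ (1 + α) with htt
        have h1 : max 1 t * Fl n k ^ 2 ≤ (1 + max t 0) * Fl n k ^ 2 := by
          apply mul_le_mul_of_nonneg_right _ hc0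
          apply max_le
          · have := le_max_right t 0; linarith
          · have := le_max_left t 0; linarith
        have h2 : ENNReal.ofReal (max t 0) = ENNReal.ofReal t := by
          rcases le_total t 0 with ht | ht
          · rw [max_eq_right ht, ENNReal.ofReal_zero, eq_comm, ENNReal.ofReal_eq_zero]
            exact ht
          · rw [max_eq_left ht]
        calc ENNReal.ofReal (max 1 t * Fl n k ^ 2)
            ≤ ENNReal.ofReal ((1 + max t 0) * Fl n k ^ 2) := ENNReal.ofReal_le_ofReal h1
          _ = ENNReal.ofReal (Fl n k ^ 2)
              + ENNReal.ofReal (max t 0) * ENNReal.ofReal (Fl n k ^ 2) := by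
              rw [add_mul, one_mul,
                ENNReal.ofReal_add hc0 (mul_nonneg (le_max_right t 0) hc0),
                ENNReal.ofReal_mul (le_max_right t 0)]
          _ = _ := by rw [h2]
      calc ∫⁻ ω, G (n, k) ω ∂μ
          ≤ ∫⁻ ω, (ENNReal.ofReal (Fl n k ^ 2)
              + ENNReal.ofReal ((x k ω - x n ω) ^ (1 + α))
                * ENNReal.ofReal (Fl n k ^ 2)) ∂μ := lintegral_mono hptw
        _ = ENNReal.ofReal (Fl n k ^ 2)
              + (∫⁻ ω, ENNReal.ofReal ((x k ω - x n ω) ^ (1 + α)) ∂μ)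
                * ENNReal.ofReal (Fl n k ^ 2) := by
            rw [lintegral_add_left measurable_const,
              lintegral_mul_const' _ _ ENNReal.ofReal_ne_top, lintegral_const,
              measure_univ, mul_one]
        _ ≤ ENNReal.ofReal (Fl n k ^ 2)
              + ENNReal.ofReal (C * ((k : ℝ) - (n : ℝ)) ^ (1 + α))
                * ENNReal.ofReal (Fl n k ^ 2) :=
            add_le_add_right (mul_le_mul_left (hmom k n h) _) _
        _ = ENNReal.ofReal (Fl n k ^ 2)
              * (1 + ENNReal.ofReal (C * ((k : ℝ) - (n : ℝ)) ^ (1 + α))) := by ring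
    · rw [if_neg h]
      have hz : G (n, k) = fun _ => 0 := by
        funext ω
        simp only [hG, if_neg h, ENNReal.ofReal_zero]
      rw [hz, lintegral_zero]
  have hkey : ∫⁻ ω, ∑' p : ℕ × ℕ, G p ω ∂μ ≠ ⊤ := by
    rw [lintegral_tsum (fun p => (hGmeas p).aemeasurable)]
    exact ne_top_of_le_ne_top (energy_det α C hα0 hα1) (ENNReal.tsum_le_tsum hGle)
  have hae : ∀ᵐ ω ∂μ, (∑' p : ℕ × ℕ, G p ω) < ⊤ :=
    ae_lt_top' (Measurable.aemeasurable (Measurable.ennreal_tsum hGmeas)) hkey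
  filter_upwards [hae] with ω hω
  refine ⟨Fl, Fl_antisymm, summable_abs_Fl, tsum_Fl, ?_⟩
  have hsummable := ENNReal.summable_toReal hω.ne
  refine hsummable.congr (fun p => ?_)
  by_cases h : p.1 < p.2
  · simp only [hG, if_pos h]
    rw [ENNReal.toReal_ofReal
      (mul_nonneg (le_trans zero_le_one (le_max_left _ _)) (sq_nonneg _))]
  · simp only [hG, if_neg h]
    rw [ENNReal.toReal_ofReal le_rfl]
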